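/- Let ℓ ≥ 3 be prime and q a prime power with q ≡ 1 (mod ℓ) but q ≢ 1 (mod ℓ²). Then the number of affine solutions (x,y) ∈ 𝔽_q² of y^ℓ = x(x^ℓ - 1) equals q, hence the projective curve has q + 1 points over 𝔽_q. -/

import Mathlib

open Finset Polynomial

lemma aux_card_pow {F : Type*} [Field F] [Fintype F] [DecidableEq F] {ℓ : ℕ} (hℓ0 : ℓ ≠ 0)
    {ζ : F} (hζ : IsPrimitiveRoot ζ ℓ) (c : F) :
    Fintype.card {y : F // y ^ ℓ = c} =
      if c = 0 then 1 else if ∃ y : F, y ^ ℓ = c then ℓ else 0 := by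
  rcases eq_or_ne c 0 with rfl | hc
  · rw [if_pos rfl]
    rw [Fintype.card_eq_one_iff]
    refine ⟨⟨0, by simp [hℓ0]⟩, ?_⟩
    rintro ⟨y, hy⟩
    ext
    exact pow_eq_zero_iff hℓ0 |>.mp hy
  · rw [if_neg hc]
    have h1 : Fintype.card {y : F // y ^ ℓ = c} = ((nthRoots ℓ c).toFinset).card := by
      rw [Fintype.card_subtype]
      congr 1
      ext y
      simp [Multiset.mem_toFinset, mem_nthRoots (Nat.pos_of_ne_zero hℓ0)]
    rw [h1, Multiset.toFinset_card_of_nodup (hζ.nthRoots_nodup hc), hζ.card_nthRoots]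
    congr 1


lemma aux_unique {F : Type*} [Field F] {ℓ : ℕ} (hℓ : ℓ.Prime) {ζ : F} (hζ1 : ζ ^ ℓ = 1)
    (hζ0 : ζ ≠ 0) (hpow : ¬ ∃ w : F, w ^ ℓ = ζ) {c : F} (hc : c ≠ 0) {j k : ℕ}
    (hjk : j < k) (hkℓ : k < ℓ)
    (hj : ∃ y : F, y ^ ℓ = ζ ^ j * c) (hk : ∃ y : F, y ^ ℓ = ζ ^ k * c) : False := by
  obtain ⟨y, hy⟩ := hj
  obtain ⟨z, hz⟩ := hk
  have hy0 : y ≠ 0 := by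
    intro h
    rw [h, zero_pow hℓ.ne_zero] at hy
    exact (mul_ne_zero (pow_ne_zero _ hζ0) hc) hy.symm
  set d := k - j with hd
  have hd0 : 0 < d := by omega
  have hdℓ : d < ℓ := by omega
  have hk' : ζ ^ k = ζ ^ d * ζ ^ j := by rw [← pow_add]; congr 1; omega
  have hwz : (z / y) ^ ℓ = ζ ^ d := by
    rw [div_pow, hz, hy, hk', mul_assoc, mul_div_assoc,
      div_self (mul_ne_zero (pow_ne_zero _ hζ0) hc), mul_one]
  -- invert d mod ℓ
  haveI : Fact ℓ.Prime := ⟨hℓ⟩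
  have hdd : ¬ ℓ ∣ d := Nat.not_dvd_of_pos_of_lt hd0 hdℓ
  have hdz : (d : ZMod ℓ) ≠ 0 := by
    rwa [Ne, ZMod.natCast_eq_zero_iff]
  set n := ((d : ZMod ℓ)⁻¹).val with hn
  have hmod : (((d * n : ℕ)) : ZMod ℓ) = ((1 : ℕ) : ZMod ℓ) := by
    push_cast
    rw [ZMod.natCast_val, ZMod.cast_id, mul_inv_cancel₀ hdz]
  have hmeq : d * n ≡ 1 [MOD ℓ] := (ZMod.natCast_eq_natCast_iff _ _ _).mp hmod
  have hℓ1 : 1 < ℓ := hℓ.one_lt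
  have hdn : d * n % ℓ = 1 := by
    have := hmeq
    unfold Nat.ModEq at this
    rwa [Nat.mod_eq_of_lt hℓ1] at this
  obtain ⟨m, hm⟩ : ∃ m, d * n = ℓ * m + 1 := ⟨d * n / ℓ, by have := Nat.div_add_mod (d * n) ℓ; omega⟩
  refine hpow ⟨(z / y) ^ n, ?_⟩
  rw [← pow_mul, mul_comm n ℓ, pow_mul, hwz, ← pow_mul, hm, pow_add, pow_mul, hζ1,
    one_pow, one_mul, pow_one]


lemma aux_exists {F : Type*} [Field F] [Fintype F] [DecidableEq F] {ℓ : ℕ} (hℓ : ℓ.Prime)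
    {ζ : F} (hζ : IsPrimitiveRoot ζ ℓ) (hpow : ¬ ∃ w : F, w ^ ℓ = ζ)
    {c : F} (hc : c ≠ 0) : ∃ k < ℓ, ∃ y : F, y ^ ℓ = ζ ^ k * c := by
  classical
  have hζ1 : ζ ^ ℓ = 1 := hζ.pow_eq_one
  have hζ0 : ζ ≠ 0 := fun h => one_ne_zero ((h ▸ hζ1).symm.trans (zero_pow hℓ.ne_zero))
  set T : ℕ → Finset F := fun k => univ.filter (fun c => c ≠ 0 ∧ ∃ y : F, y ^ ℓ = ζ ^ k * c)
    with hT
  have hsub : ∀ k, T k ⊆ univ.filter (fun c : F => c ≠ 0) := by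
    intro k c hcmem
    simp only [hT, mem_filter, mem_univ, true_and] at hcmem ⊢
    exact hcmem.1
  -- card of T 0
  have hfib : (univ.filter (fun y : F => y ≠ 0)).card = ∑ c ∈ T 0, ℓ := by
    rw [Finset.card_eq_sum_card_fiberwise (f := fun y : F => y ^ ℓ) (t := T 0)
      (fun y hy => by
        simp only [Finset.mem_coe, mem_filter, mem_univ, true_and] at hy
        simp only [Finset.mem_coe, hT, mem_filter, mem_univ, true_and]
        exact ⟨pow_ne_zero _ hy, ⟨y, by rw [pow_zero, one_mul]⟩⟩)]
    refine Finset.sum_congr rfl fun c hcmem => ?_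
    simp only [hT, mem_filter, mem_univ, true_and] at hcmem
    have h1 : Finset.filter (fun y : F => y ^ ℓ = c) (univ.filter (fun y : F => y ≠ 0))
        = univ.filter (fun y : F => y ^ ℓ = c) := by
      rw [Finset.filter_filter]
      apply Finset.filter_congr
      intro y _
      constructor
      · rintro ⟨_, h⟩; exact h
      · intro h
        exact ⟨fun h0 => hcmem.1 (by rw [← h, h0, zero_pow hℓ.ne_zero]), h⟩
    rw [h1, ← Fintype.card_subtype, aux_card_pow hℓ.ne_zero hζ c, if_neg hcmem.1,
      if_pos ?_]
    obtain ⟨y, hy⟩ := hcmem.2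
    exact ⟨y, by rwa [pow_zero, one_mul] at hy⟩
  have hcard0 : (T 0).card * ℓ = Fintype.card F - 1 := by
    have h2 : (univ.filter (fun y : F => y ≠ 0)).card = Fintype.card F - 1 := by
      rw [Finset.filter_ne', Finset.card_erase_of_mem (mem_univ 0), Finset.card_univ]
    rw [← h2, hfib, Finset.sum_const, smul_eq_mul]
  -- all T k have equal card
  have hcardk : ∀ k, (T k).card = (T 0).card := by
    intro k
    refine Finset.card_bij' (fun c _ => ζ ^ k * c) (fun c _ => (ζ ^ k)⁻¹ * c) ?_ ?_ ?_ ?_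
    · intro c hcmem
      simp only [hT, mem_filter, mem_univ, true_and] at hcmem ⊢
      refine ⟨mul_ne_zero (pow_ne_zero _ hζ0) hcmem.1, ?_⟩
      obtain ⟨y, hy⟩ := hcmem.2
      exact ⟨y, by rw [hy, pow_zero, one_mul]⟩
    · intro c hcmem
      simp only [hT, mem_filter, mem_univ, true_and] at hcmem ⊢
      refine ⟨mul_ne_zero (inv_ne_zero (pow_ne_zero _ hζ0)) hcmem.1, ?_⟩
      obtain ⟨y, hy⟩ := hcmem.2
      refine ⟨y, ?_⟩
      rw [pow_zero, one_mul] at hy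
      rw [hy, ← mul_assoc, mul_inv_cancel₀ (pow_ne_zero _ hζ0), one_mul]
    · intro c _
      show (ζ ^ k)⁻¹ * (ζ ^ k * c) = c
      rw [← mul_assoc, inv_mul_cancel₀ (pow_ne_zero _ hζ0), one_mul]
    · intro c _
      show ζ ^ k * ((ζ ^ k)⁻¹ * c) = c
      rw [← mul_assoc, mul_inv_cancel₀ (pow_ne_zero _ hζ0), one_mul]
  -- disjointness
  have hdisj : ∀ j ∈ Finset.range ℓ, ∀ k ∈ Finset.range ℓ, j ≠ k → Disjoint (T j) (T k) := by
    intro j hj k hk hjk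
    rw [Finset.disjoint_left]
    intro c hcj hck
    simp only [hT, mem_filter, mem_univ, true_and] at hcj hck
    rcases lt_or_gt_of_ne hjk with h | h
    · exact aux_unique hℓ hζ1 hζ0 hpow hcj.1 h (Finset.mem_range.mp hk) hcj.2 hck.2
    · exact aux_unique hℓ hζ1 hζ0 hpow hcj.1 h (Finset.mem_range.mp hj) hck.2 hcj.2
  -- the union covers everything nonzero
  have hcover : (Finset.range ℓ).biUnion T = univ.filter (fun c : F => c ≠ 0) := by
    apply Finset.eq_of_subset_of_card_le
    · exact Finset.biUnion_subset.mpr fun k _ => hsub k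
    · rw [Finset.card_biUnion hdisj]
      have : ∑ k ∈ Finset.range ℓ, (T k).card = ℓ * (T 0).card := by
        rw [Finset.sum_congr rfl fun k _ => hcardk k, Finset.sum_const, Finset.card_range,
          smul_eq_mul]
      rw [this, Finset.filter_ne', Finset.card_erase_of_mem (mem_univ 0), Finset.card_univ,
        ← hcard0, mul_comm]
  have : c ∈ (Finset.range ℓ).biUnion T := by
    rw [hcover]; simp [hc]
  obtain ⟨k, hk, hck⟩ := Finset.mem_biUnion.mp this
  simp only [hT, mem_filter, mem_univ, true_and] at hck
  exact ⟨k, Finset.mem_range.mp hk, hck.2⟩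


theorem stmt_2 (ℓ : ℕ) (hℓ : ℓ.Prime) (h3 : 3 ≤ ℓ)
    (F : Type*) [Field F] [Fintype F] [DecidableEq F]
    (hmod1 : Fintype.card F % ℓ = 1)
    (hmod2 : Fintype.card F % ℓ ^ 2 ≠ 1) :
    Fintype.card {p : F × F // p.2 ^ ℓ = p.1 * (p.1 ^ ℓ - 1)} = Fintype.card F ∧
    Fintype.card {p : F × F // p.2 ^ ℓ = p.1 * (p.1 ^ ℓ - 1)} + 1 = Fintype.card F + 1 := by
  classical
  haveI : Fact ℓ.Prime := ⟨hℓ⟩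
  set q := Fintype.card F with hq
  have hq1 : 1 < q := Fintype.one_lt_card
  have hdvd : ℓ ∣ q - 1 := ⟨q / ℓ, by have := Nat.div_add_mod q ℓ; omega⟩
  have hndvd : ¬ ℓ ^ 2 ∣ q - 1 := by
    rintro ⟨m, hm⟩
    apply hmod2
    have h9 : 9 ≤ ℓ ^ 2 := by nlinarith
    have hq' : q = ℓ ^ 2 * m + 1 := by omega
    rw [hq', Nat.mul_add_mod, Nat.mod_eq_of_lt (by omega)]
  -- primitive root
  obtain ⟨ζu, hord⟩ := exists_prime_orderOf_dvd_card (G := Fˣ) ℓ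
    (by rw [Fintype.card_units, ← hq]; exact hdvd)
  have hζ : IsPrimitiveRoot (ζu : F) ℓ :=
    IsPrimitiveRoot.coe_units_iff.mpr (hord ▸ IsPrimitiveRoot.orderOf ζu)
  set ζ : F := (ζu : F) with hζdef
  have hζ1 : ζ ^ ℓ = 1 := hζ.pow_eq_one
  have hζ0 : ζ ≠ 0 := Units.ne_zero ζu
  -- ζ is not an ℓ-th power
  have hpow : ¬ ∃ w : F, w ^ ℓ = ζ := by
    rintro ⟨w, hw⟩
    have hw0 : w ≠ 0 := by
      intro h; rw [h, zero_pow hℓ.ne_zero] at hw; exact hζ0 hw.symm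
    set wu : Fˣ := Units.mk0 w hw0 with hwu
    have hwuζ : wu ^ ℓ = ζu := by
      ext; push_cast [hwu]; exact hw
    have hζu1 : ζu ≠ 1 := by
      intro h; rw [h, orderOf_one] at hord; omega
    have hdvd2 : orderOf wu ∣ ℓ ^ 2 := by
      apply orderOf_dvd_of_pow_eq_one
      rw [pow_two, mul_comm, pow_mul, hwuζ, ← hord, pow_orderOf_eq_one]
    obtain ⟨i, hi, hoi⟩ := (Nat.dvd_prime_pow hℓ).mp hdvd2
    interval_cases i
    · have : wu = 1 := orderOf_eq_one_iff.mp (by simpa using hoi)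
      exact hζu1 (by rw [← hwuζ, this, one_pow])
    · have h1 : orderOf wu = ℓ := by simpa using hoi
      have : wu ^ ℓ = 1 := by rw [← h1]; exact pow_orderOf_eq_one wu
      exact hζu1 (by rw [← hwuζ, this])
    · apply hndvd
      have := orderOf_dvd_card (x := wu)
      rw [hoi, Fintype.card_units, ← hq] at this
      exact this
  -- counting
  have hmain : Fintype.card {p : F × F // p.2 ^ ℓ = p.1 * (p.1 ^ ℓ - 1)} = q := by
    rw [Fintype.card_congr (Equiv.subtypeProdEquivSigmaSubtype
      (fun a b : F => b ^ ℓ = a * (a ^ ℓ - 1))), Fintype.card_sigma]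
    have hsum : ∀ x : F, Fintype.card {y : F // y ^ ℓ = x * (x ^ ℓ - 1)} =
        if x * (x ^ ℓ - 1) = 0 then 1 else
          if ∃ y : F, y ^ ℓ = x * (x ^ ℓ - 1) then ℓ else 0 := by
      intro x; rw [aux_card_pow hℓ.ne_zero hζ]
    rw [Finset.sum_congr rfl fun x _ => hsum x]
    rw [← Finset.sum_filter_add_sum_filter_not univ (fun x : F => x * (x ^ ℓ - 1) = 0)]
    set Z := univ.filter (fun x : F => x * (x ^ ℓ - 1) = 0) with hZ
    set S := univ.filter (fun x : F => ¬ x * (x ^ ℓ - 1) = 0) with hS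
    have hZsum : ∑ x ∈ Z, (if x * (x ^ ℓ - 1) = 0 then 1 else
        if ∃ y : F, y ^ ℓ = x * (x ^ ℓ - 1) then ℓ else 0) = Z.card := by
      rw [Finset.sum_congr rfl fun x hx => ?_, Finset.sum_const, smul_eq_mul, mul_one]
      rw [hZ, mem_filter] at hx
      rw [if_pos hx.2]
    have hSsum : ∑ x ∈ S, (if x * (x ^ ℓ - 1) = 0 then 1 else
        if ∃ y : F, y ^ ℓ = x * (x ^ ℓ - 1) then ℓ else 0) =
        ∑ x ∈ S, (if ∃ y : F, y ^ ℓ = x * (x ^ ℓ - 1) then ℓ else 0) := by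
      refine Finset.sum_congr rfl fun x hx => ?_
      rw [hS, mem_filter] at hx
      rw [if_neg hx.2]
    rw [hZsum, hSsum]
    -- key identity about multiplicativity of f under ζ^k
    have hfmul : ∀ (a x : F), a ^ ℓ = 1 → (a * x) * ((a * x) ^ ℓ - 1) = a * (x * (x ^ ℓ - 1)) := by
      intro a x ha; rw [mul_pow, ha, one_mul]; ring
    have hζk1 : ∀ k : ℕ, (ζ ^ k) ^ ℓ = 1 := by
      intro k; rw [← pow_mul, mul_comm, pow_mul, hζ1, one_pow]
    have hζk0 : ∀ k : ℕ, (ζ : F) ^ k ≠ 0 := fun k => pow_ne_zero _ hζ0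
    set A : ℕ → Finset F := fun k =>
      S.filter (fun x => ∃ y : F, y ^ ℓ = ζ ^ k * (x * (x ^ ℓ - 1))) with hA
    -- each x in S lies in exactly one A k
    have hone : ∀ x ∈ S, ((Finset.range ℓ).filter
        (fun k => ∃ y : F, y ^ ℓ = ζ ^ k * (x * (x ^ ℓ - 1)))).card = 1 := by
      intro x hx
      rw [hS, mem_filter] at hx
      apply le_antisymm
      · apply Finset.card_le_one.mpr
        intro j hj k hk
        rw [mem_filter, Finset.mem_range] at hj hk
        by_contra hne
        rcases lt_or_gt_of_ne hne with h | h
        · exact aux_unique hℓ hζ1 hζ0 hpow hx.2 h hk.1 hj.2 hk.2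
        · exact aux_unique hℓ hζ1 hζ0 hpow hx.2 h hj.1 hk.2 hj.2
      · rw [Nat.one_le_iff_ne_zero, Ne, Finset.card_eq_zero, ← Ne,
          ← Finset.nonempty_iff_ne_empty]
        obtain ⟨k, hkl, hy⟩ := aux_exists hℓ hζ hpow hx.2
        exact ⟨k, by rw [mem_filter, Finset.mem_range]; exact ⟨hkl, hy⟩⟩
    have hScard : S.card = ∑ k ∈ Finset.range ℓ, (A k).card := by
      calc S.card = ∑ x ∈ S, 1 := by rw [Finset.sum_const, smul_eq_mul, mul_one]
        _ = ∑ x ∈ S, ((Finset.range ℓ).filter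
            (fun k => ∃ y : F, y ^ ℓ = ζ ^ k * (x * (x ^ ℓ - 1)))).card :=
          (Finset.sum_congr rfl fun x hx => (hone x hx).symm)
        _ = ∑ x ∈ S, ∑ k ∈ Finset.range ℓ,
            (if ∃ y : F, y ^ ℓ = ζ ^ k * (x * (x ^ ℓ - 1)) then 1 else 0) := by
          refine Finset.sum_congr rfl fun x _ => ?_
          rw [Finset.card_filter]
        _ = ∑ k ∈ Finset.range ℓ, ∑ x ∈ S,
            (if ∃ y : F, y ^ ℓ = ζ ^ k * (x * (x ^ ℓ - 1)) then 1 else 0) := Finset.sum_comm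
        _ = ∑ k ∈ Finset.range ℓ, (A k).card := by
          refine Finset.sum_congr rfl fun k _ => ?_
          rw [hA, Finset.card_filter]
    -- all A k have the same cardinality
    have hAcard : ∀ k, (A k).card = (A 0).card := by
      intro k
      refine Finset.card_bij' (fun x _ => ζ ^ k * x) (fun x _ => (ζ ^ k)⁻¹ * x) ?_ ?_ ?_ ?_
      · intro x hx
        simp only [hA, hS, mem_filter, mem_univ, true_and] at hx ⊢
        obtain ⟨hx0, y, hy⟩ := hx
        have hf : (ζ ^ k * x) * ((ζ ^ k * x) ^ ℓ - 1) = ζ ^ k * (x * (x ^ ℓ - 1)) :=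
          hfmul _ _ (hζk1 k)
        refine ⟨?_, ⟨y, ?_⟩⟩
        · rw [hf]; exact mul_ne_zero (hζk0 k) hx0
        · rw [hf, pow_zero, one_mul]; exact hy
      · intro x hx
        simp only [hA, hS, mem_filter, mem_univ, true_and] at hx ⊢
        obtain ⟨hx0, y, hy⟩ := hx
        rw [pow_zero, one_mul] at hy
        have h1 : ((ζ ^ k)⁻¹) ^ ℓ = 1 := by rw [inv_pow, hζk1, inv_one]
        have hf : ((ζ ^ k)⁻¹ * x) * (((ζ ^ k)⁻¹ * x) ^ ℓ - 1) = (ζ ^ k)⁻¹ * (x * (x ^ ℓ - 1)) :=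
          hfmul _ _ h1
        refine ⟨?_, ⟨y, ?_⟩⟩
        · rw [hf]; exact mul_ne_zero (inv_ne_zero (hζk0 k)) hx0
        · rw [hf, ← mul_assoc, mul_inv_cancel₀ (hζk0 k), one_mul]; exact hy
      · intro x _
        show (ζ ^ k)⁻¹ * (ζ ^ k * x) = x
        rw [← mul_assoc, inv_mul_cancel₀ (hζk0 k), one_mul]
      · intro x _
        show ζ ^ k * ((ζ ^ k)⁻¹ * x) = x
        rw [← mul_assoc, mul_inv_cancel₀ (hζk0 k), one_mul]
    have hA0 : A 0 = S.filter (fun x => ∃ y : F, y ^ ℓ = x * (x ^ ℓ - 1)) := by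
      rw [hA]
      refine Finset.filter_congr fun x _ => ?_
      rw [pow_zero, one_mul]
    have hSA : ∑ x ∈ S, (if ∃ y : F, y ^ ℓ = x * (x ^ ℓ - 1) then ℓ else 0) = S.card := by
      rw [← Finset.sum_filter, Finset.sum_const, smul_eq_mul, ← hA0, hScard,
        Finset.sum_congr rfl fun k _ => hAcard k, Finset.sum_const, Finset.card_range,
        smul_eq_mul, mul_comm]
    rw [hSA]
    have hpart : Z.card + S.card = Fintype.card F := by
      rw [hZ, hS, Finset.card_filter_add_card_filter_not, Finset.card_univ]
    exact hpart
  exact ⟨hmain, by rw [hmain]⟩
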